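/- Let q*: [1,∞) → (0,∞) be nondecreasing with q*(r) ≥ c r^α for r ≥ 1 (c > 0, α > 0). Define U(r) = ∫_1^{1/r} s^{n−1}/q*(s) ds for r ∈ (0,1]. If a finite Borel measure ϖ on ℝⁿ satisfies sup_x ϖ{y : ‖x−y‖ ≤ r} ≤ C r^d for all r ∈ (0,1] with d > n − α, then sup_x ∫_{‖y−x‖ ≤ 1} U(‖y−x‖) ϖ(dy) < ∞. -/

import Mathlib

open MeasureTheory Real

/-- Auxiliary: commuting a natural power with an rpow. -/
lemma aux_pow_rpow (x : ℝ) (hx : 0 ≤ x) (m : ℕ) (e : ℝ) :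
    ((x ^ m : ℝ)) ^ e = (x ^ e) ^ m := by
  rw [← Real.rpow_natCast x m, ← Real.rpow_mul hx, mul_comm, Real.rpow_mul hx,
    Real.rpow_natCast]

/-- Auxiliary: comparison of U with the integral of a power function. -/
lemma aux_U_le {n : ℕ} (hn : 1 ≤ n) (qstar : ℝ → ℝ) (c β : ℝ) (hc : 0 < c)
    (hβ : 0 < β) (hβn : β ≠ (n : ℝ))
    (hpos : ∀ r : ℝ, 1 ≤ r → 0 < qstar r)
    (hlow : ∀ r : ℝ, 1 ≤ r → c * r ^ β ≤ qstar r)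
    (T : ℝ) (hT1 : (1 : ℝ) ≤ T) :
    (∫ s in (1 : ℝ)..T, s ^ (n - 1) / qstar s)
      ≤ max 0 (c⁻¹ * ((T ^ ((n : ℝ) - β) - 1) / ((n : ℝ) - β))) := by
  by_cases hInt : IntervalIntegrable (fun s => s ^ (n - 1) / qstar s) volume 1 T
  · refine le_trans ?_ (le_max_right _ _)
    have hg : ∀ s ∈ Set.Icc (1 : ℝ) T,
        s ^ (n - 1) / qstar s ≤ c⁻¹ * s ^ ((n : ℝ) - 1 - β) := by
      intro s hs
      have hs1 : (1 : ℝ) ≤ s := hs.1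
      have hs0 : (0 : ℝ) < s := lt_of_lt_of_le zero_lt_one hs1
      have hqβ : c * s ^ β ≤ qstar s := hlow s hs1
      have hqβ0 : 0 < c * s ^ β := by positivity
      have hnum : (0 : ℝ) ≤ s ^ (n - 1) := pow_nonneg hs0.le _
      have h1 : s ^ (n - 1) / qstar s ≤ s ^ (n - 1) / (c * s ^ β) :=
        div_le_div_of_nonneg_left hnum hqβ0 hqβ
      refine h1.trans_eq ?_
      have hcast : ((n - 1 : ℕ) : ℝ) = (n : ℝ) - 1 := by
        rw [Nat.cast_sub hn]; norm_num
      have hpow : (s : ℝ) ^ (n - 1) = s ^ ((n : ℝ) - 1) := by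
        rw [← Real.rpow_natCast s (n - 1), hcast]
      rw [hpow, Real.rpow_sub hs0 ((n : ℝ) - 1) β]
      have hsβ : (0 : ℝ) < s ^ β := Real.rpow_pos_of_pos hs0 β
      field_simp
    have hgint : IntervalIntegrable (fun s => c⁻¹ * s ^ ((n : ℝ) - 1 - β))
        volume 1 T := by
      apply ContinuousOn.intervalIntegrable
      apply ContinuousOn.mul continuousOn_const
      apply ContinuousOn.rpow_const continuousOn_id
      intro s hs
      rw [Set.uIcc_of_le hT1] at hs
      refine Or.inl ?_
      simp only [id_eq]
      intro h
      rw [h] at hs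
      exact absurd hs.1 (by norm_num)
    refine (intervalIntegral.integral_mono_on hT1 hInt hgint hg).trans_eq ?_
    rw [intervalIntegral.integral_const_mul]
    congr 1
    have hzero : (0 : ℝ) ∉ Set.uIcc (1 : ℝ) T := by
      rw [Set.uIcc_of_le hT1]
      intro h
      exact absurd h.1 (by norm_num)
    have hne : (n : ℝ) - 1 - β ≠ -1 := by
      intro h
      apply hβn
      have : (n : ℝ) = β := by linarith
      exact this.symm
    rw [integral_rpow (Or.inr ⟨hne, hzero⟩)]
    have hexp : (n : ℝ) - 1 - β + 1 = (n : ℝ) - β := by ring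
    rw [hexp, Real.one_rpow]
  · rw [intervalIntegral.integral_undef hInt]
    exact le_max_left _ _

/-- Let `q* : [1,∞) → (0,∞)` be nondecreasing with `q*(r) ≥ c r^α` for
`r ≥ 1`, and `U(r) = ∫_1^{1/r} s^{n-1}/q*(s) ds` for `r ∈ (0,1]`. If a finite Borel
measure `ϖ` on `ℝⁿ` satisfies `sup_x ϖ(B(x,r)) ≤ C r^d` for `r ∈ (0,1]` with
`d > n - α`, then `sup_x ∫_{‖y-x‖≤1} U(‖y-x‖) ϖ(dy) < ∞`. -/
theorem stmt12 {n : ℕ} (hn : 1 ≤ n) (qstar : ℝ → ℝ) (c α C d : ℝ)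
    (hc : 0 < c) (hα : 0 < α) (hC : 0 < C) (hd : (n : ℝ) - α < d)
    (hpos : ∀ r : ℝ, 1 ≤ r → 0 < qstar r)
    (hmono : MonotoneOn qstar (Set.Ici (1 : ℝ)))
    (hlow : ∀ r : ℝ, 1 ≤ r → c * r ^ α ≤ qstar r)
    (ϖ : Measure (EuclideanSpace ℝ (Fin n))) [IsFiniteMeasure ϖ]
    (hϖ : ∀ (x : EuclideanSpace ℝ (Fin n)) (r : ℝ), 0 < r → r ≤ 1 →
      (ϖ (Metric.closedBall x r)).toReal ≤ C * r ^ d) :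
    ∃ B : ℝ, ∀ x : EuclideanSpace ℝ (Fin n),
      (∫ y in {y | ‖y - x‖ ≤ 1},
          (∫ s in (1 : ℝ)..(1 / ‖y - x‖), s ^ (n - 1) / qstar s) ∂ϖ) ≤ B := by
  have hn' : (1 : ℝ) ≤ (n : ℝ) := by exact_mod_cast hn
  set M₀ : ℝ := ‖∫ s in (1 : ℝ)..(0 : ℝ), s ^ (n - 1) / qstar s‖ with hM0def
  have hM00 : 0 ≤ M₀ := norm_nonneg _
  rcases le_or_gt d 0 with hdle | hd0
  -- Case `d ≤ 0`: then `α > n` and `U` is uniformly bounded.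
  · have hαn : (n : ℝ) < α := by linarith
    set β : ℝ := ((n : ℝ) + α) / 2 with hβdef
    have hβn : (n : ℝ) < β := by rw [hβdef]; linarith
    have hβα : β ≤ α := by rw [hβdef]; linarith
    have hβ0 : 0 < β := by linarith
    have hlowβ : ∀ r : ℝ, 1 ≤ r → c * r ^ β ≤ qstar r := by
      intro r hr
      refine le_trans ?_ (hlow r hr)
      exact mul_le_mul_of_nonneg_left
        (Real.rpow_le_rpow_of_exponent_le hr hβα) hc.le
    set K₂ : ℝ := c⁻¹ * (β - (n : ℝ))⁻¹ with hK2def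
    have hK20 : 0 ≤ K₂ := by
      rw [hK2def]
      have : (0 : ℝ) < β - n := by linarith
      positivity
    have key2 : ∀ r : ℝ, 0 < r → r ≤ 1 →
        |∫ s in (1 : ℝ)..(1 / r), s ^ (n - 1) / qstar s| ≤ K₂ := by
      intro r hr0 hr1
      have hT1 : (1 : ℝ) ≤ 1 / r := one_le_one_div hr0 hr1
      have hnonneg : 0 ≤ ∫ s in (1 : ℝ)..(1 / r), s ^ (n - 1) / qstar s := by
        apply intervalIntegral.integral_nonneg hT1
        intro u hu
        exact div_nonneg (pow_nonneg (by linarith [hu.1]) _) (hpos u hu.1).le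
      rw [abs_of_nonneg hnonneg]
      have hU := aux_U_le hn qstar c β hc hβ0 (by intro h; exact absurd h.symm (ne_of_lt hβn))
        hpos hlowβ (1 / r) hT1
      refine hU.trans ?_
      have hTg : (0 : ℝ) ≤ (1 / r) ^ ((n : ℝ) - β) := Real.rpow_nonneg (by positivity) _
      have hval : c⁻¹ * (((1 / r) ^ ((n : ℝ) - β) - 1) / ((n : ℝ) - β)) ≤ K₂ := by
        rw [hK2def]
        have hneg : (n : ℝ) - β < 0 := by linarith
        have h1 : ((1 / r) ^ ((n : ℝ) - β) - 1) / ((n : ℝ) - β)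
            = (1 - (1 / r) ^ ((n : ℝ) - β)) / (β - (n : ℝ)) := by
          rw [div_eq_div_iff (by linarith) (by linarith)]
          ring
        rw [h1]
        have h2 : (1 - (1 / r) ^ ((n : ℝ) - β)) / (β - (n : ℝ)) ≤ 1 / (β - (n : ℝ)) := by
          gcongr
          · linarith
        refine (mul_le_mul_of_nonneg_left h2 (inv_nonneg.mpr hc.le)).trans_eq ?_
        rw [one_div]
      exact max_le hK20 hval
    refine ⟨max M₀ K₂ * (ϖ Set.univ).toReal, fun x => ?_⟩
    set f : EuclideanSpace ℝ (Fin n) → ℝ :=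
      fun y => ∫ s in (1 : ℝ)..(1 / ‖y - x‖), s ^ (n - 1) / qstar s with hfdef
    set S : Set (EuclideanSpace ℝ (Fin n)) := {y | ‖y - x‖ ≤ 1} with hSdef
    have hSmeas : MeasurableSet S := by
      have : S = Metric.closedBall x 1 := by
        ext y; simp [hSdef, Metric.mem_closedBall, dist_eq_norm]
      rw [this]; exact Metric.isClosed_closedBall.measurableSet
    have hBmax0 : 0 ≤ max M₀ K₂ := le_trans hM00 (le_max_left _ _)
    have hL : (∫⁻ y in S, ENNReal.ofReal ‖f y‖ ∂ϖ)
        ≤ ENNReal.ofReal (max M₀ K₂ * (ϖ Set.univ).toReal) := by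
      have hbd : ∀ y ∈ S, ENNReal.ofReal ‖f y‖ ≤ ENNReal.ofReal (max M₀ K₂) := by
        intro y hy
        apply ENNReal.ofReal_le_ofReal
        rcases eq_or_lt_of_le (norm_nonneg (y - x)) with h0 | h0
        · have hyx : (1 : ℝ) / ‖y - x‖ = 0 := by rw [← h0]; simp
          rw [hfdef]
          simp only [hyx]
          exact le_max_left _ _
        · refine le_trans ?_ (le_max_right _ _)
          rw [Real.norm_eq_abs]
          exact key2 _ h0 hy
      calc (∫⁻ y in S, ENNReal.ofReal ‖f y‖ ∂ϖ)
          ≤ ∫⁻ _ in S, ENNReal.ofReal (max M₀ K₂) ∂ϖ := setLIntegral_mono' hSmeas hbd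
        _ = ENNReal.ofReal (max M₀ K₂) * ϖ S := setLIntegral_const _ _
        _ ≤ ENNReal.ofReal (max M₀ K₂) * ϖ Set.univ :=
            mul_le_mul_right (measure_mono (Set.subset_univ _)) _
        _ = ENNReal.ofReal (max M₀ K₂ * (ϖ Set.univ).toReal) := by
            rw [ENNReal.ofReal_mul hBmax0, ENNReal.ofReal_toReal (measure_ne_top ϖ _)]
    calc (∫ y in S, f y ∂ϖ) ≤ ‖∫ y in S, f y ∂ϖ‖ := le_abs_self _
      _ ≤ (∫⁻ y in S, ENNReal.ofReal ‖f y‖ ∂ϖ).toReal :=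
          norm_integral_le_lintegral_norm f
      _ ≤ max M₀ K₂ * (ϖ Set.univ).toReal :=
          ENNReal.toReal_le_of_le_ofReal
            (by positivity) hL
  -- Case `0 < d`: dyadic annulus decomposition.
  · -- choose an auxiliary exponent β
    set a : ℝ := max ((n : ℝ) - d) 0 with ha
    set b : ℝ := min α (n : ℝ) with hb
    have hab : a < b := by
      rcases le_or_gt ((n : ℝ) - d) 0 with h | h
      · have h0 : a = 0 := max_eq_right h
        rw [h0]; exact lt_min hα (by linarith)
      · have h0 : a = (n : ℝ) - d := max_eq_left h.le
        rw [h0]; exact lt_min (by linarith) (by linarith)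
    set β : ℝ := (a + b) / 2 with hβdef
    have hβa : a < β := by rw [hβdef]; linarith
    have hβb : β < b := by rw [hβdef]; linarith
    have hβ0 : 0 < β := lt_of_le_of_lt (le_max_right _ _) hβa
    have hβα : β ≤ α := (hβb.trans_le (min_le_left _ _)).le
    have hβn : β < (n : ℝ) := hβb.trans_le (min_le_right _ _)
    have hβd : (n : ℝ) - β < d := by
      have h1 : (n : ℝ) - d ≤ a := le_max_left _ _
      linarith
    set γ : ℝ := (n : ℝ) - β with hγdef
    have hγ0 : 0 < γ := by rw [hγdef]; linarith
    have hγd : γ < d := hβd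
    set K : ℝ := 1 / (c * γ) with hKdef
    have hK0 : 0 < K := by rw [hKdef]; positivity
    have hlowβ : ∀ r : ℝ, 1 ≤ r → c * r ^ β ≤ qstar r := by
      intro r hr
      refine le_trans ?_ (hlow r hr)
      exact mul_le_mul_of_nonneg_left
        (Real.rpow_le_rpow_of_exponent_le hr hβα) hc.le
    -- key pointwise bound: for 0 < r ≤ 1, |U(r)| ≤ K r^(-γ)
    have key : ∀ r : ℝ, 0 < r → r ≤ 1 →
        |∫ s in (1 : ℝ)..(1 / r), s ^ (n - 1) / qstar s| ≤ K * r ^ (-γ) := by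
      intro r hr0 hr1
      have hT1 : (1 : ℝ) ≤ 1 / r := one_le_one_div hr0 hr1
      have hKr : 0 < K * r ^ (-γ) := by positivity
      have hnonneg : 0 ≤ ∫ s in (1 : ℝ)..(1 / r), s ^ (n - 1) / qstar s := by
        apply intervalIntegral.integral_nonneg hT1
        intro u hu
        exact div_nonneg (pow_nonneg (by linarith [hu.1]) _) (hpos u hu.1).le
      rw [abs_of_nonneg hnonneg]
      have hU := aux_U_le hn qstar c β hc hβ0 (ne_of_lt hβn) hpos hlowβ (1 / r) hT1
      refine hU.trans (max_le hKr.le ?_)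
      have hTγ : (1 / r) ^ γ = r ^ (-γ) := by
        rw [one_div, Real.inv_rpow hr0.le, ← Real.rpow_neg hr0.le]
      have hγeq : (n : ℝ) - β = γ := hγdef.symm
      rw [hγeq, hTγ]
      have hcγ : (0 : ℝ) < c * γ := by positivity
      calc c⁻¹ * ((r ^ (-γ) - 1) / γ)
          ≤ c⁻¹ * (r ^ (-γ) / γ) :=
            mul_le_mul_of_nonneg_left
              ((div_le_div_iff_of_pos_right hγ0).mpr (by linarith)) (inv_nonneg.mpr hc.le)
        _ = K * r ^ (-γ) := by rw [hKdef, one_div, mul_inv]; ring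
    -- geometric ratio
    set ρ : ℝ := (2 : ℝ) ^ γ * ((2 : ℝ)⁻¹) ^ d with hρdef
    have h2inv : ((2 : ℝ)⁻¹) ^ d = ((2 : ℝ) ^ d)⁻¹ := Real.inv_rpow (by norm_num) d
    have hρeq : ρ = (2 : ℝ) ^ (γ - d) := by
      rw [hρdef, h2inv, ← Real.rpow_neg (by norm_num), ← Real.rpow_add (by norm_num)]
      ring_nf
    have hρ0 : 0 ≤ ρ := by rw [hρeq]; positivity
    have hρ1 : ρ < 1 := by
      rw [hρeq]
      exact Real.rpow_lt_one_of_one_lt_of_neg one_lt_two (by linarith)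
    have hρsum : (0 : ℝ) ≤ (1 - ρ)⁻¹ := inv_nonneg.mpr (by linarith)
    set G : ℝ := K * (2 : ℝ) ^ γ * C with hGdef
    have hG0 : 0 ≤ G := by rw [hGdef]; positivity
    set B : ℝ := M₀ * (ϖ Set.univ).toReal + G * (1 - ρ)⁻¹ with hBdef
    have hB0 : 0 ≤ B := by
      rw [hBdef]
      have := ENNReal.toReal_nonneg (a := ϖ Set.univ)
      positivity
    refine ⟨B, fun x => ?_⟩
    set f : EuclideanSpace ℝ (Fin n) → ℝ :=
      fun y => ∫ s in (1 : ℝ)..(1 / ‖y - x‖), s ^ (n - 1) / qstar s with hfdef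
    set S : Set (EuclideanSpace ℝ (Fin n)) := {y | ‖y - x‖ ≤ 1} with hSdef
    set A : ℕ → Set (EuclideanSpace ℝ (Fin n)) :=
      fun k => {y | ((2 : ℝ)⁻¹) ^ (k + 1) < ‖y - x‖} ∩
        Metric.closedBall x (((2 : ℝ)⁻¹) ^ k) with hAdef
    -- covering
    have cover : S ⊆ {x} ∪ ⋃ k, A k := by
      intro y hy
      have hy1 : ‖y - x‖ ≤ 1 := hy
      rcases eq_or_lt_of_le (norm_nonneg (y - x)) with h0 | h0
      · left
        have : y - x = 0 := norm_eq_zero.mp h0.symm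
        simp [sub_eq_zero.mp this]
      · right
        have hex : ∃ m : ℕ, ((2 : ℝ)⁻¹) ^ (m + 1) < ‖y - x‖ := by
          obtain ⟨m, hm⟩ := exists_pow_lt_of_lt_one h0 (by norm_num : (2 : ℝ)⁻¹ < 1)
          exact ⟨m, lt_of_le_of_lt
            (pow_le_pow_of_le_one (by norm_num) (by norm_num) (Nat.le_succ m)) hm⟩
        set k := Nat.find hex with hk
        have hklt : ((2 : ℝ)⁻¹) ^ (k + 1) < ‖y - x‖ := Nat.find_spec hex
        have hkle : ‖y - x‖ ≤ ((2 : ℝ)⁻¹) ^ k := by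
          rcases Nat.eq_zero_or_pos k with hk0 | hkpos
          · rw [hk0]; simpa using hy1
          · obtain ⟨j, hj⟩ := Nat.exists_eq_succ_of_ne_zero hkpos.ne'
            have hmin := Nat.find_min hex (by omega : j < k)
            rw [hj]
            exact le_of_not_gt (by simpa [Nat.succ_eq_add_one] using hmin)
        refine Set.mem_iUnion.mpr ⟨k, ⟨hklt, ?_⟩⟩
        rw [Metric.mem_closedBall, dist_eq_norm]
        exact hkle
    -- per-annulus bound
    have hAk : ∀ k : ℕ, (∫⁻ y in A k, ENNReal.ofReal ‖f y‖ ∂ϖ)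
        ≤ ENNReal.ofReal (G * ρ ^ k) := by
      intro k
      have hmeasA : MeasurableSet (A k) := by
        apply MeasurableSet.inter
        · exact measurableSet_lt measurable_const
            ((measurable_id.sub measurable_const).norm)
        · exact Metric.isClosed_closedBall.measurableSet
      have hrk1 : ((2 : ℝ)⁻¹) ^ k ≤ 1 :=
        pow_le_one₀ (by norm_num) (by norm_num)
      have hrk0 : (0 : ℝ) < ((2 : ℝ)⁻¹) ^ k := by positivity
      have hbd : ∀ y ∈ A k, ENNReal.ofReal ‖f y‖
          ≤ ENNReal.ofReal (K * ((2 : ℝ) ^ γ) ^ (k + 1)) := by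
        intro y hy
        obtain ⟨h1, h2⟩ := hy
        have h1' : ((2 : ℝ)⁻¹) ^ (k + 1) < ‖y - x‖ := h1
        have hr0 : 0 < ‖y - x‖ := lt_trans (by positivity) h1'
        have hr1 : ‖y - x‖ ≤ 1 := by
          rw [Metric.mem_closedBall, dist_eq_norm] at h2
          exact h2.trans hrk1
        apply ENNReal.ofReal_le_ofReal
        rw [Real.norm_eq_abs]
        refine (key _ hr0 hr1).trans ?_
        have h3 : ‖y - x‖ ^ (-γ) ≤ (((2 : ℝ)⁻¹) ^ (k + 1)) ^ (-γ) :=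
          Real.rpow_le_rpow_of_nonpos (by positivity) h1'.le (by linarith)
        have h4 : ((((2 : ℝ)⁻¹) ^ (k + 1) : ℝ)) ^ (-γ) = ((2 : ℝ) ^ γ) ^ (k + 1) := by
          rw [aux_pow_rpow _ (by norm_num) _ _]
          congr 1
          rw [Real.inv_rpow (by norm_num), ← Real.rpow_neg (by norm_num), neg_neg]
        rw [h4] at h3
        exact mul_le_mul_of_nonneg_left h3 hK0.le
      have hmeasure : ϖ (A k) ≤ ENNReal.ofReal (C * (((2 : ℝ)⁻¹) ^ d) ^ k) := by
        have hsub : ϖ (A k) ≤ ϖ (Metric.closedBall x (((2 : ℝ)⁻¹) ^ k)) :=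
          measure_mono Set.inter_subset_right
        refine hsub.trans ?_
        rw [ENNReal.le_ofReal_iff_toReal_le (measure_ne_top ϖ _) (by positivity)]
        refine (hϖ x _ hrk0 hrk1).trans_eq ?_
        congr 1
        exact aux_pow_rpow _ (by norm_num) k d
      calc (∫⁻ y in A k, ENNReal.ofReal ‖f y‖ ∂ϖ)
          ≤ ∫⁻ _ in A k, ENNReal.ofReal (K * ((2 : ℝ) ^ γ) ^ (k + 1)) ∂ϖ :=
            setLIntegral_mono' hmeasA hbd
        _ = ENNReal.ofReal (K * ((2 : ℝ) ^ γ) ^ (k + 1)) * ϖ (A k) :=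
            setLIntegral_const _ _
        _ ≤ ENNReal.ofReal (K * ((2 : ℝ) ^ γ) ^ (k + 1))
              * ENNReal.ofReal (C * (((2 : ℝ)⁻¹) ^ d) ^ k) :=
            mul_le_mul_right hmeasure _
        _ = ENNReal.ofReal (G * ρ ^ k) := by
            rw [← ENNReal.ofReal_mul (by positivity)]
            congr 1
            rw [hGdef, hρdef]
            ring
    -- the point mass at x
    have hpt : (∫⁻ y in ({x} : Set (EuclideanSpace ℝ (Fin n))),
        ENNReal.ofReal ‖f y‖ ∂ϖ) ≤ ENNReal.ofReal (M₀ * (ϖ Set.univ).toReal) := by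
      have hbd : ∀ y ∈ ({x} : Set (EuclideanSpace ℝ (Fin n))),
          ENNReal.ofReal ‖f y‖ ≤ ENNReal.ofReal M₀ := by
        intro y hy
        rw [Set.mem_singleton_iff] at hy
        subst hy
        have hyx : (1 : ℝ) / ‖y - y‖ = 0 := by simp
        rw [hfdef]
        simp only [hyx]
        rw [hM0def]
      calc (∫⁻ y in ({x} : Set (EuclideanSpace ℝ (Fin n))), ENNReal.ofReal ‖f y‖ ∂ϖ)
          ≤ ∫⁻ _ in ({x} : Set (EuclideanSpace ℝ (Fin n))), ENNReal.ofReal M₀ ∂ϖ :=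
            setLIntegral_mono' (measurableSet_singleton x) hbd
        _ = ENNReal.ofReal M₀ * ϖ {x} := setLIntegral_const _ _
        _ ≤ ENNReal.ofReal M₀ * ϖ Set.univ :=
            mul_le_mul_right (measure_mono (Set.subset_univ _)) _
        _ = ENNReal.ofReal (M₀ * (ϖ Set.univ).toReal) := by
            rw [ENNReal.ofReal_mul hM00, ENNReal.ofReal_toReal (measure_ne_top ϖ _)]
    -- the sum over annuli
    have hsum : (∫⁻ y in ⋃ k, A k, ENNReal.ofReal ‖f y‖ ∂ϖ)
        ≤ ENNReal.ofReal (G * (1 - ρ)⁻¹) := by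
      calc (∫⁻ y in ⋃ k, A k, ENNReal.ofReal ‖f y‖ ∂ϖ)
          ≤ ∑' k, ∫⁻ y in A k, ENNReal.ofReal ‖f y‖ ∂ϖ := lintegral_iUnion_le _ _
        _ ≤ ∑' k, ENNReal.ofReal (G * ρ ^ k) := ENNReal.tsum_le_tsum hAk
        _ = ENNReal.ofReal (∑' k : ℕ, G * ρ ^ k) :=
            (ENNReal.ofReal_tsum_of_nonneg (fun k => by positivity)
              ((summable_geometric_of_lt_one hρ0 hρ1).mul_left G)).symm
        _ = ENNReal.ofReal (G * (1 - ρ)⁻¹) := by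
            rw [tsum_mul_left, tsum_geometric_of_lt_one hρ0 hρ1]
    -- assemble
    have hL : (∫⁻ y in S, ENNReal.ofReal ‖f y‖ ∂ϖ) ≤ ENNReal.ofReal B := by
      calc (∫⁻ y in S, ENNReal.ofReal ‖f y‖ ∂ϖ)
          ≤ ∫⁻ y in ({x} ∪ ⋃ k, A k), ENNReal.ofReal ‖f y‖ ∂ϖ :=
            lintegral_mono_set cover
        _ ≤ (∫⁻ y in ({x} : Set (EuclideanSpace ℝ (Fin n))), ENNReal.ofReal ‖f y‖ ∂ϖ)
              + ∫⁻ y in ⋃ k, A k, ENNReal.ofReal ‖f y‖ ∂ϖ := lintegral_union_le _ _ _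
        _ ≤ ENNReal.ofReal (M₀ * (ϖ Set.univ).toReal)
              + ENNReal.ofReal (G * (1 - ρ)⁻¹) := add_le_add hpt hsum
        _ = ENNReal.ofReal B := by
            rw [hBdef, ENNReal.ofReal_add (by positivity) (by positivity)]
    calc (∫ y in S, f y ∂ϖ) ≤ ‖∫ y in S, f y ∂ϖ‖ := le_abs_self _
      _ ≤ (∫⁻ y in S, ENNReal.ofReal ‖f y‖ ∂ϖ).toReal :=
          norm_integral_le_lintegral_norm f
      _ ≤ B := ENNReal.toReal_le_of_le_ofReal hB0 hL
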